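/- Let 0 ≤ p1 < 1, 0 ≤ p2 < 1, M ≥ 1, and fix an integer N with 0 ≤ N ≤ M (the number of received packets in a batch). Define P(m) = C(N, m)·p1^m·(1−p1)^(N−m) for 0 ≤ m ≤ N and P(m) = 0 for N < m ≤ M, and for u ≥ 0 define f(u) = ∑_{m=u+1}^{M} P(m) + ∑_{m=1}^{u} P(m)·∑_{l=0}^{m−1} C(u, l)·(1−p2)^l·p2^(u−l). Then f(u) is non-increasing in u: f(u+1) ≤ f(u) for all u ≥ 0, with strict inequality when 0 < p1 < 1, 0 < p2 < 1 and N ≥ 1. -/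
import Mathlib


/-- P(m): probability that exactly m of the N received packets of a batch are
erased at a peer (phase-1 erasure probability p1); zero for m > N since C(N,m) = 0. -/
noncomputable def batchP (N : ℕ) (p1 : ℝ) (m : ℕ) : ℝ :=
  (N.choose m : ℝ) * p1 ^ m * (1 - p1) ^ (N - m)

/-- The usefulness metric f(u) of equation (7): the probability that the (u+1)-th
coded packet sent from a batch (for which the sender received N packets) is still
useful for a peer, with peer-to-peer erasure probability p2. -/
noncomputable def usefulness (M N : ℕ) (p1 p2 : ℝ) (u : ℕ) : ℝ :=
  (∑ m ∈ Finset.Icc (u + 1) M, batchP N p1 m) +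
    ∑ m ∈ Finset.Icc 1 u, batchP N p1 m *
      ∑ l ∈ Finset.range m, (u.choose l : ℝ) * (1 - p2) ^ l * p2 ^ (u - l)

/-- Binomial CDF step: for `k + 1 ≤ u`,
`S(u+1, k+1) = S(u, k+1) - C(u,k)·q^(k+1)·p2^(u-k)` with `q = 1 - p2`. -/
lemma innerA (p2 : ℝ) (u k : ℕ) (hk : k + 1 ≤ u) :
    ∑ l ∈ Finset.range (k + 1), ((u + 1).choose l : ℝ) * (1 - p2) ^ l * p2 ^ (u + 1 - l)
      = (∑ l ∈ Finset.range (k + 1), (u.choose l : ℝ) * (1 - p2) ^ l * p2 ^ (u - l))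
        - (u.choose k : ℝ) * (1 - p2) ^ (k + 1) * p2 ^ (u - k) := by
  induction k with
  | zero =>
      simp only [zero_add, Finset.sum_range_one, Nat.choose_zero_right, Nat.cast_one, pow_zero,
        Nat.sub_zero, one_mul, mul_one]
      rw [pow_succ]
      ring
  | succ k ih =>
      have hk' : k + 1 ≤ u := by omega
      conv_rhs => rw [Finset.sum_range_succ]
      rw [Finset.sum_range_succ, ih hk']
      have e1 : u + 1 - (k + 1) = u - k := by omega
      have e3 : ((u + 1).choose (k + 1) : ℝ) = (u.choose k : ℝ) + (u.choose (k + 1) : ℝ) := by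
        rw [Nat.choose_succ_succ]; push_cast; ring
      have e2 : u - k = (u - (k + 1)) + 1 := by omega
      rw [e1, e3, e2, pow_succ]
      ring

/-- `S(u+1, u+1) = 1 - (1-p2)^(u+1)`. -/
lemma innerC (p2 : ℝ) (u : ℕ) :
    ∑ l ∈ Finset.range (u + 1), ((u + 1).choose l : ℝ) * (1 - p2) ^ l * p2 ^ (u + 1 - l)
      = 1 - (1 - p2) ^ (u + 1) := by
  have h := add_pow (1 - p2) p2 (u + 1)
  rw [Finset.sum_range_succ] at h
  simp only [sub_add_cancel, one_pow, Nat.sub_self, pow_zero, Nat.choose_self,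
    Nat.cast_one, mul_one, one_mul] at h
  have h2 : ∑ l ∈ Finset.range (u + 1), ((u + 1).choose l : ℝ) * (1 - p2) ^ l * p2 ^ (u + 1 - l)
      = ∑ l ∈ Finset.range (u + 1), (1 - p2) ^ l * p2 ^ (u + 1 - l) * ((u + 1).choose l : ℝ) :=
    Finset.sum_congr rfl fun l _ => by ring
  rw [h2]
  linarith

lemma batchP_eq_zero (N : ℕ) (p1 : ℝ) {m : ℕ} (h : N < m) : batchP N p1 m = 0 := by
  simp [batchP, Nat.choose_eq_zero_of_lt h]

lemma batchP_nonneg (N : ℕ) {p1 : ℝ} (h0 : 0 ≤ p1) (h1 : p1 ≤ 1) (m : ℕ) :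
    0 ≤ batchP N p1 m := by
  have h2 : (0:ℝ) ≤ 1 - p1 := by linarith
  exact mul_nonneg (mul_nonneg (by positivity) (by positivity)) (by positivity)

/-- The key difference formula:
`f(u) - f(u+1) = P(u+1)·q^(u+1) + ∑_{m=1}^{u} P(m)·C(u,m-1)·q^m·p2^(u+1-m)`. -/
lemma usefulness_diff (M N : ℕ) (p1 p2 : ℝ) (hN : N ≤ M) (u : ℕ) :
    usefulness M N p1 p2 u - usefulness M N p1 p2 (u + 1)
      = batchP N p1 (u + 1) * (1 - p2) ^ (u + 1)
        + ∑ m ∈ Finset.Icc 1 u, batchP N p1 m *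
            ((u.choose (m - 1) : ℝ) * (1 - p2) ^ m * p2 ^ (u + 1 - m)) := by
  unfold usefulness
  have hsplit : ∑ m ∈ Finset.Icc (u + 1) M, batchP N p1 m
      = batchP N p1 (u + 1) + ∑ m ∈ Finset.Icc (u + 2) M, batchP N p1 m := by
    by_cases h : u + 1 ≤ M
    · have hins : Finset.Icc (u + 1) M = insert (u + 1) (Finset.Icc (u + 2) M) := by
        ext x; simp; omega
      rw [hins, Finset.sum_insert (by simp)]
    · have h1 : Finset.Icc (u + 1) M = ∅ := by rw [Finset.Icc_eq_empty_iff]; omega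
      have h2 : Finset.Icc (u + 2) M = ∅ := by rw [Finset.Icc_eq_empty_iff]; omega
      rw [h1, h2, batchP_eq_zero N p1 (by omega : N < u + 1)]
      simp
  have hsplit2 : ∑ m ∈ Finset.Icc 1 (u + 1), batchP N p1 m *
        ∑ l ∈ Finset.range m, ((u + 1).choose l : ℝ) * (1 - p2) ^ l * p2 ^ (u + 1 - l)
      = (∑ m ∈ Finset.Icc 1 u, batchP N p1 m *
          ∑ l ∈ Finset.range m, ((u + 1).choose l : ℝ) * (1 - p2) ^ l * p2 ^ (u + 1 - l))
        + batchP N p1 (u + 1) * (1 - (1 - p2) ^ (u + 1)) := by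
    rw [Finset.sum_Icc_succ_top (by omega : 1 ≤ u + 1), innerC]
  rw [hsplit, hsplit2]
  have hinner : ∀ m ∈ Finset.Icc 1 u,
      batchP N p1 m * ∑ l ∈ Finset.range m, ((u + 1).choose l : ℝ) * (1 - p2) ^ l * p2 ^ (u + 1 - l)
        = batchP N p1 m * (∑ l ∈ Finset.range m, (u.choose l : ℝ) * (1 - p2) ^ l * p2 ^ (u - l))
          - batchP N p1 m * ((u.choose (m - 1) : ℝ) * (1 - p2) ^ m * p2 ^ (u + 1 - m)) := by
    intro m hm
    simp only [Finset.mem_Icc] at hm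
    obtain ⟨hm1, hm2⟩ := hm
    obtain ⟨k, rfl⟩ : ∃ k, m = k + 1 := ⟨m - 1, by omega⟩
    rw [innerA p2 u k (by omega)]
    have e : u + 1 - (k + 1) = u - k := by omega
    simp only [Nat.add_sub_cancel, e]
    ring
  rw [Finset.sum_congr rfl hinner, Finset.sum_sub_distrib,
    show u + 1 + 1 = u + 2 from rfl]
  ring

/-- The usefulness metric is non-increasing in the transmission count u, and strictly
decreasing when 0 < p1 < 1, 0 < p2 < 1 and N ≥ 1. -/
theorem usefulness_antitone (M N : ℕ) (p1 p2 : ℝ)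
    (hM : 1 ≤ M) (hN : N ≤ M) (hp1 : 0 ≤ p1) (hp1' : p1 < 1)
    (hp2 : 0 ≤ p2) (hp2' : p2 < 1) :
    (∀ u : ℕ, usefulness M N p1 p2 (u + 1) ≤ usefulness M N p1 p2 u) ∧
      (0 < p1 → 0 < p2 → 1 ≤ N →
        ∀ u : ℕ, usefulness M N p1 p2 (u + 1) < usefulness M N p1 p2 u) := by
  have hq : (0:ℝ) < 1 - p2 := by linarith
  have hPnn := batchP_nonneg N hp1 hp1'.le
  constructor
  · intro u
    rw [← sub_nonneg, usefulness_diff M N p1 p2 hN u]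
    have h1 : 0 ≤ batchP N p1 (u + 1) * (1 - p2) ^ (u + 1) :=
      mul_nonneg (hPnn _) (by positivity)
    have h2 : 0 ≤ ∑ m ∈ Finset.Icc 1 u, batchP N p1 m *
        ((u.choose (m - 1) : ℝ) * (1 - p2) ^ m * p2 ^ (u + 1 - m)) := by
      refine Finset.sum_nonneg fun m _ => mul_nonneg (hPnn _) ?_
      positivity
    linarith
  · intro hp1pos hp2pos hN1 u
    rw [← sub_pos, usefulness_diff M N p1 p2 hN u]
    have hP1 : 0 < batchP N p1 1 := by
      unfold batchP
      have : (0:ℝ) < 1 - p1 := by linarith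
      have hc : 0 < (N.choose 1 : ℝ) := by
        rw [Nat.choose_one_right]
        exact_mod_cast Nat.lt_of_lt_of_le Nat.zero_lt_one hN1
      positivity
    rcases Nat.eq_zero_or_pos u with rfl | hu
    · rw [Finset.Icc_eq_empty (by omega : ¬(1:ℕ) ≤ 0), Finset.sum_empty, add_zero]
      exact mul_pos hP1 (by positivity)
    · have h1 : 0 ≤ batchP N p1 (u + 1) * (1 - p2) ^ (u + 1) :=
        mul_nonneg (hPnn _) (by positivity)
      have h2 : 0 < ∑ m ∈ Finset.Icc 1 u, batchP N p1 m *
          ((u.choose (m - 1) : ℝ) * (1 - p2) ^ m * p2 ^ (u + 1 - m)) := by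
        refine Finset.sum_pos' (fun m _ => mul_nonneg (hPnn _) (by positivity)) ⟨1, ?_, ?_⟩
        · simp [Finset.mem_Icc]; omega
        · simp only [Nat.sub_self, Nat.choose_zero_right, Nat.cast_one, one_mul, pow_one]
          exact mul_pos hP1 (mul_pos hq (by positivity))
      linarith
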